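/- Let ρ > 0, let a_β ∈ 𝒜_ρ for |β| ≤ n, and set M = max_β { ρ^{−|β|} ‖a_β‖_ρ } (assume M > 0). Then for any initial data φ_0,…,φ_{m−1} ∈ 𝒜_ρ, the Cauchy problem ∂^m u(t,x)/∂t^m = Σ_{|β|=0}^{n} a_β(x) D^β u(t, x), u^{(k)}(0,x) = φ_k(x) (k = 0,…,m−1) has a unique locally analytic 𝒜_ρ-valued solution u(t) = Σ_{j≥0} c_j t^j (c_j ∈ 𝒜_ρ), and the series converges for all t ∈ ℂ_[p] with |t|_p < p^{−1/(p−1)} · M^{−1/m}. -/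

import Mathlib

open Filter Topology

namespace P17
variable {K : Type*} [NontriviallyNormedField K] {n : ℕ} {ρ : ℝ}

/-- decay predicate -/
def Decay (ρ : ℝ) (f : (Fin n → ℕ) → K) : Prop :=
  Tendsto (fun α : Fin n → ℕ => ‖f α‖ * ρ ^ (∑ i, α i)) cofinite (nhds 0)

theorem bdd (hρ : 0 < ρ) {f : (Fin n → ℕ) → K} (hf : Decay ρ f) :
    BddAbove (Set.range fun α : Fin n → ℕ => ‖f α‖ * ρ ^ (∑ i, α i)) := by
  have h1 : ∀ᶠ α in cofinite, ‖f α‖ * ρ ^ (∑ i, α i) < 1 := by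
    have := NormedAddCommGroup.tendsto_nhds_zero.mp hf 1 one_pos
    filter_upwards [this] with α hα
    calc ‖f α‖ * ρ ^ (∑ i, α i) ≤ |‖f α‖ * ρ ^ (∑ i, α i)| := le_abs_self _
    _ < 1 := by simpa [abs_mul, abs_pow, abs_norm] using hα
  rw [Filter.eventually_cofinite] at h1
  obtain ⟨B, hB⟩ := (h1.image (fun α => ‖f α‖ * ρ ^ (∑ i, α i))).bddAbove
  refine ⟨max B 1, ?_⟩
  rintro x ⟨α, rfl⟩
  by_cases h : ‖f α‖ * ρ ^ (∑ i, α i) < 1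
  · exact le_max_of_le_right h.le
  · exact le_max_of_le_left (hB (Set.mem_image_of_mem _ h))

theorem le_nu (hρ : 0 < ρ) {f : (Fin n → ℕ) → K} (hf : Decay ρ f) (α : Fin n → ℕ) :
    ‖f α‖ * ρ ^ (∑ i, α i) ≤ ⨆ γ : Fin n → ℕ, ‖f γ‖ * ρ ^ (∑ i, γ i) :=
  le_ciSup (bdd hρ hf) α

theorem nu_le {f : (Fin n → ℕ) → K} {C : ℝ}
    (h : ∀ α : Fin n → ℕ, ‖f α‖ * ρ ^ (∑ i, α i) ≤ C) :
    (⨆ γ : Fin n → ℕ, ‖f γ‖ * ρ ^ (∑ i, γ i)) ≤ C :=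
  ciSup_le h

theorem nu_nonneg (hρ : 0 < ρ) (f : (Fin n → ℕ) → K) :
    0 ≤ ⨆ γ : Fin n → ℕ, ‖f γ‖ * ρ ^ (∑ i, γ i) :=
  Real.iSup_nonneg fun α => by positivity

theorem sum_wt [IsUltrametricDist K] (hρ : 0 < ρ) {ι : Type*} (s : Finset ι) (F : ι → K)
    (α : Fin n → ℕ) {C : ℝ} (hC : 0 ≤ C) (h : ∀ b ∈ s, ‖F b‖ * ρ ^ (∑ i, α i) ≤ C) :
    ‖∑ b ∈ s, F b‖ * ρ ^ (∑ i, α i) ≤ C := by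
  have hpos : (0:ℝ) < ρ ^ (∑ i, α i) := pow_pos hρ _
  have h2 : ‖∑ b ∈ s, F b‖ ≤ C / ρ ^ (∑ i, α i) :=
    IsUltrametricDist.norm_sum_le_of_forall_le_of_nonneg (div_nonneg hC hpos.le)
      (fun b hb => (le_div_iff₀ hpos).2 (h b hb))
  calc ‖∑ b ∈ s, F b‖ * ρ ^ (∑ i, α i) ≤ (C / ρ ^ (∑ i, α i)) * ρ ^ (∑ i, α i) :=
        mul_le_mul_of_nonneg_right h2 hpos.le
  _ = C := div_mul_cancel₀ _ hpos.ne'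

theorem decay_smul (hρ : 0 < ρ) (s : K) {f : (Fin n → ℕ) → K} (hf : Decay ρ f) :
    Decay ρ (s • f) := by
  have : (fun α : Fin n → ℕ => ‖(s • f) α‖ * ρ ^ (∑ i, α i))
      = fun α : Fin n → ℕ => ‖s‖ * (‖f α‖ * ρ ^ (∑ i, α i)) := by
    funext α; simp [norm_mul, mul_assoc]
  rw [Decay, this]
  simpa using hf.const_mul ‖s‖

theorem decay_sum (hρ : 0 < ρ) {ι : Type*} (s : Finset ι) (F : ι → ((Fin n → ℕ) → K))
    (h : ∀ b ∈ s, Decay ρ (F b)) : Decay ρ (∑ b ∈ s, F b) := by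
  apply squeeze_zero (fun α => by positivity)
    (g := fun α : Fin n → ℕ => ∑ b ∈ s, ‖F b α‖ * ρ ^ (∑ i, α i))
  · intro α
    rw [Finset.sum_apply, ← Finset.sum_mul]
    exact mul_le_mul_of_nonneg_right (norm_sum_le _ _) (by positivity)
  · simpa using tendsto_finset_sum s h

theorem deg_split {i α : Fin n → ℕ} (hle : i ≤ α) :
    (∑ j, α j) = (∑ j, i j) + (∑ j, (α - i) j) := by
  rw [← Finset.sum_add_distrib]
  refine Finset.sum_congr rfl fun j _ => ?_
  have hj : i j ≤ α j := hle j
  simp only [Pi.sub_apply]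
  omega


theorem mul_term_wt_le (hρ : 0 < ρ) {g h : (Fin n → ℕ) → K} (hg : Decay ρ g) (hh : Decay ρ h)
    {i α : Fin n → ℕ} (hle : i ≤ α) :
    ‖g i * h (α - i)‖ * ρ ^ (∑ j, α j)
      ≤ (⨆ γ : Fin n → ℕ, ‖g γ‖ * ρ ^ (∑ j, γ j)) * ⨆ γ : Fin n → ℕ, ‖h γ‖ * ρ ^ (∑ j, γ j) := by
  have e1 : ‖g i * h (α - i)‖ * ρ ^ (∑ j, α j)
      = (‖g i‖ * ρ ^ (∑ j, i j)) * (‖h (α - i)‖ * ρ ^ (∑ j, (α - i) j)) := by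
    rw [deg_split hle, norm_mul, pow_add]; ring
  rw [e1]
  exact mul_le_mul (le_nu hρ hg i) (le_nu hρ hh (α - i)) (by positivity) (nu_nonneg hρ g)

theorem mul_wt_le [IsUltrametricDist K] (hρ : 0 < ρ) {g h : (Fin n → ℕ) → K}
    (hg : Decay ρ g) (hh : Decay ρ h) (α : Fin n → ℕ) :
    ‖∑ i ∈ Finset.Iic α, g i * h (α - i)‖ * ρ ^ (∑ j, α j)
      ≤ (⨆ γ : Fin n → ℕ, ‖g γ‖ * ρ ^ (∑ j, γ j)) * ⨆ γ : Fin n → ℕ, ‖h γ‖ * ρ ^ (∑ j, γ j) :=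
  sum_wt hρ _ _ _ (mul_nonneg (nu_nonneg hρ g) (nu_nonneg hρ h))
    (fun i hi => mul_term_wt_le hρ hg hh (Finset.mem_Iic.1 hi))

theorem decay_mul [IsUltrametricDist K] (hρ : 0 < ρ) {g h : (Fin n → ℕ) → K}
    (hg : Decay ρ g) (hh : Decay ρ h) :
    Decay ρ (fun α : Fin n → ℕ => ∑ i ∈ Finset.Iic α, g i * h (α - i)) := by
  rw [Decay, NormedAddCommGroup.tendsto_nhds_zero]
  intro ε hε
  set νg := ⨆ γ : Fin n → ℕ, ‖g γ‖ * ρ ^ (∑ j, γ j) with hνg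
  set νh := ⨆ γ : Fin n → ℕ, ‖h γ‖ * ρ ^ (∑ j, γ j) with hνh
  set B : ℝ := max νg (max νh 1) with hB
  have hB1 : (1:ℝ) ≤ B := le_max_of_le_right (le_max_right _ _)
  have hBg : νg ≤ B := le_max_left _ _
  have hBh : νh ≤ B := le_max_of_le_right (le_max_left _ _)
  have hB0 : (0:ℝ) < B := lt_of_lt_of_le one_pos hB1
  set δ : ℝ := ε / (2 * B) with hδdef
  have hδ : 0 < δ := div_pos hε (by positivity)
  have hg' : {i : Fin n → ℕ | ¬ ‖g i‖ * ρ ^ (∑ j, i j) < δ}.Finite := by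
    rw [← Filter.eventually_cofinite]
    filter_upwards [NormedAddCommGroup.tendsto_nhds_zero.mp hg δ hδ] with i hi
    calc ‖g i‖ * ρ ^ (∑ j, i j) ≤ |‖g i‖ * ρ ^ (∑ j, i j)| := le_abs_self _
    _ < δ := by simpa [abs_mul, abs_pow, abs_norm] using hi
  have hh' : {i : Fin n → ℕ | ¬ ‖h i‖ * ρ ^ (∑ j, i j) < δ}.Finite := by
    rw [← Filter.eventually_cofinite]
    filter_upwards [NormedAddCommGroup.tendsto_nhds_zero.mp hh δ hδ] with i hi
    calc ‖h i‖ * ρ ^ (∑ j, i j) ≤ |‖h i‖ * ρ ^ (∑ j, i j)| := le_abs_self _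
    _ < δ := by simpa [abs_mul, abs_pow, abs_norm] using hi
  rw [Filter.eventually_cofinite]
  apply Set.Finite.subset (Set.Finite.image2 (· + ·) hg' hh')
  intro α hα
  by_contra hmem
  apply hα
  have key : ∀ i ∈ Finset.Iic α, ‖g i * h (α - i)‖ * ρ ^ (∑ j, α j) ≤ ε / 2 := by
    intro i hi
    have hle : i ≤ α := Finset.mem_Iic.1 hi
    have e1 : ‖g i * h (α - i)‖ * ρ ^ (∑ j, α j)
        = (‖g i‖ * ρ ^ (∑ j, i j)) * (‖h (α - i)‖ * ρ ^ (∑ j, (α - i) j)) := by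
      rw [deg_split hle, norm_mul, pow_add]; ring
    have hsplit : i + (α - i) = α := by
      funext j; have hj : i j ≤ α j := hle j
      simp only [Pi.add_apply, Pi.sub_apply]; omega
    have hδB : δ * B = ε / 2 := by
      rw [hδdef]; field_simp
    rw [e1]
    by_cases hcase : ‖g i‖ * ρ ^ (∑ j, i j) < δ
    · calc (‖g i‖ * ρ ^ (∑ j, i j)) * (‖h (α - i)‖ * ρ ^ (∑ j, (α - i) j))
          ≤ δ * B := mul_le_mul hcase.le (le_trans (le_nu hρ hh _) hBh) (by positivity) hδ.le
      _ = ε / 2 := hδB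
    · have hGnot : ‖h (α - i)‖ * ρ ^ (∑ j, (α - i) j) < δ := by
        by_contra hG
        exact hmem ⟨i, hcase, α - i, hG, hsplit⟩
      calc (‖g i‖ * ρ ^ (∑ j, i j)) * (‖h (α - i)‖ * ρ ^ (∑ j, (α - i) j))
          ≤ B * δ := mul_le_mul (le_trans (le_nu hρ hg _) hBg) hGnot.le (by positivity) hB0.le
      _ = ε / 2 := by rw [mul_comm]; exact hδB
  have hkey := sum_wt hρ (Finset.Iic α) (fun i => g i * h (α - i)) α (by positivity) key
  rw [Real.norm_eq_abs, abs_of_nonneg (by positivity)]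
  calc ‖∑ i ∈ Finset.Iic α, g i * h (α - i)‖ * ρ ^ (∑ i, α i) ≤ ε / 2 := hkey
  _ < ε := by linarith

theorem deg_add (γ β : Fin n → ℕ) : (∑ i, (γ + β) i) = (∑ i, γ i) + ∑ i, β i := by
  simp [Finset.sum_add_distrib]

theorem pow_deg_split (hρ : 0 < ρ) (γ β : Fin n → ℕ) :
    ρ ^ (∑ i, γ i) = ρ ^ (∑ i, (γ + β) i) * ρ ^ (-(∑ j, β j : ℤ)) := by
  have e : (∑ j, (β j : ℤ)) = ((∑ j, β j : ℕ) : ℤ) := by push_cast; rfl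
  rw [deg_add, pow_add, zpow_neg, e, zpow_natCast, mul_assoc,
    mul_inv_cancel₀ (pow_ne_zero _ hρ.ne'), mul_one]

theorem Dop_wt_le [IsUltrametricDist K] (hρ : 0 < ρ) {f : (Fin n → ℕ) → K} (hf : Decay ρ f)
    (β γ : Fin n → ℕ) (c : ℕ) :
    ‖(c : K) * f (γ + β)‖ * ρ ^ (∑ i, γ i)
      ≤ ρ ^ (-(∑ j, β j : ℤ)) * ⨆ δ : Fin n → ℕ, ‖f δ‖ * ρ ^ (∑ i, δ i) := by
  have h1 : ‖(c : K) * f (γ + β)‖ * ρ ^ (∑ i, γ i) ≤ ‖f (γ + β)‖ * ρ ^ (∑ i, γ i) := by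
    rw [norm_mul]
    have := IsUltrametricDist.norm_natCast_le_one K c
    rw [mul_assoc]
    exact mul_le_of_le_one_left (by positivity) this
  refine h1.trans ?_
  rw [pow_deg_split hρ γ β]
  have hz : (0:ℝ) < ρ ^ (-(∑ j, β j : ℤ)) := zpow_pos hρ _
  calc ‖f (γ + β)‖ * (ρ ^ (∑ i, (γ + β) i) * ρ ^ (-(∑ j, β j : ℤ)))
      = ρ ^ (-(∑ j, β j : ℤ)) * (‖f (γ + β)‖ * ρ ^ (∑ i, (γ + β) i)) := by ring
  _ ≤ ρ ^ (-(∑ j, β j : ℤ)) * ⨆ δ : Fin n → ℕ, ‖f δ‖ * ρ ^ (∑ i, δ i) :=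
      mul_le_mul_of_nonneg_left (le_nu hρ hf (γ + β)) hz.le

theorem decay_Dop [IsUltrametricDist K] (hρ : 0 < ρ) {f : (Fin n → ℕ) → K} (hf : Decay ρ f)
    (β : Fin n → ℕ) (c : (Fin n → ℕ) → ℕ) :
    Decay ρ (fun γ : Fin n → ℕ => (c γ : K) * f (γ + β)) := by
  have hinj : Function.Injective (fun γ : Fin n → ℕ => γ + β) := fun x y hxy => by
    funext j; have := congrFun hxy j; simpa using this
  have hcomp : Tendsto (fun γ : Fin n → ℕ => ‖f (γ + β)‖ * ρ ^ (∑ i, (γ + β) i))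
      cofinite (nhds 0) := hf.comp hinj.tendsto_cofinite
  apply squeeze_zero (fun γ => by positivity)
    (g := fun γ : Fin n → ℕ => ρ ^ (-(∑ j, β j : ℤ)) * (‖f (γ + β)‖ * ρ ^ (∑ i, (γ + β) i)))
  · intro γ
    have h1 : ‖(c γ : K) * f (γ + β)‖ * ρ ^ (∑ i, γ i) ≤ ‖f (γ + β)‖ * ρ ^ (∑ i, γ i) := by
      rw [norm_mul]
      have := IsUltrametricDist.norm_natCast_le_one K (c γ)
      rw [mul_assoc]
      exact mul_le_of_le_one_left (by positivity) this
    refine h1.trans (le_of_eq ?_)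
    rw [pow_deg_split hρ γ β]; ring
  · simpa using hcomp.const_mul (ρ ^ (-(∑ j, β j : ℤ)))

theorem norm_factorial_inv_le (p : ℕ) [hp : Fact p.Prime] (N : ℕ) :
    ‖((N.factorial : ℕ) : ℚ_[p])‖⁻¹ ≤ ((p : ℝ) ^ ((1:ℝ) / ((p : ℝ) - 1))) ^ N := by
  have hp1 : (1:ℝ) < (p:ℝ) := by exact_mod_cast hp.out.one_lt
  have hv : ((p - 1) : ℕ) * padicValNat p (N.factorial) ≤ N := by
    rw [sub_one_mul_padicValNat_factorial]; omega
  have hnorm : ‖((N.factorial : ℕ) : ℚ_[p])‖ = (p:ℝ) ^ (-(padicValNat p N.factorial : ℤ)) := by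
    rw [Padic.norm_eq_zpow_neg_valuation (by exact_mod_cast N.factorial_ne_zero), Padic.valuation_natCast]
  rw [hnorm, ← zpow_neg, neg_neg]
  have e1 : ((p:ℝ) ^ ((1:ℝ) / ((p:ℝ) - 1))) ^ N = (p:ℝ) ^ (((1:ℝ) / ((p:ℝ) - 1)) * N) := by
    rw [← Real.rpow_natCast ((p:ℝ) ^ ((1:ℝ) / ((p:ℝ) - 1))) N, ← Real.rpow_mul (by positivity)]
  have e2 : (p:ℝ) ^ ((padicValNat p N.factorial : ℤ)) =
      (p:ℝ) ^ ((padicValNat p N.factorial : ℝ)) := by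
    rw [← Real.rpow_intCast]; norm_num
  rw [e1, e2]
  apply Real.rpow_le_rpow_of_exponent_le hp1.le
  rw [div_mul_eq_mul_div, one_mul, le_div_iff₀ (by linarith)]
  have hc : ((p - 1 : ℕ) : ℝ) = (p:ℝ) - 1 := by
    have : 1 ≤ p := hp.out.one_le
    push_cast [Nat.cast_sub this]; ring
  calc (padicValNat p N.factorial : ℝ) * ((p:ℝ) - 1)
      = (((p - 1) : ℕ) * padicValNat p (N.factorial) : ℕ) := by rw [Nat.cast_mul, hc]; ring
  _ ≤ (N : ℝ) := by exact_mod_cast hv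

theorem pow_le_max {x : ℝ} (hx : 0 < x) {k m : ℕ} (hkm : k ≤ m) :
    x ^ k ≤ max 1 (x ^ m) := by
  rcases le_total x 1 with h | h
  · exact le_max_of_le_left (pow_le_one₀ hx.le h)
  · exact le_max_of_le_right (pow_le_pow_right₀ h hkm)

end P17


/-!
STATEMENT 17 (the Cauchy problem for `∂ᵐu/∂tᵐ = Σ_{|β| ≤ n} a_β D^β u` in `𝒜_ρ`).
`ℂ_[p]` is axiomatized as a complete, algebraically closed, nonarchimedean nontrivially
normed field `K` with an isometric `ℚ_[p]`-algebra structure.  An element of `𝒜_ρ` is a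
coefficient family `f : (Fin n → ℕ) → K` with `|f_α| ρ^{|α|} → 0` as `|α| → ∞` (the
`cofinite` filter), and `‖f‖_ρ = sup_α |f_α| ρ^{|α|}` is `ν f`.  A locally analytic
`𝒜_ρ`-valued solution `u(t) = Σ_j c_j t^j` is encoded by its coefficient sequence `c`;
the equation `u⁽ᵐ⁾ = A u` for a power series reads termwise as
`((j+m)!/j!)·c_{j+m} = A c_j`, the initial conditions as `k!·c_k = φ_k`, and convergence
of the series at `t` as `‖c_j‖_ρ · |t|^j → 0` (in the ultrametric Banach space `𝒜_ρ`
this is equivalent to convergence).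
-/

/-- `u(t) = Σ_j c_j t^j` is a locally analytic `𝒜_ρ`-valued solution of
`u⁽ᵐ⁾ = Aop u`, `u⁽ᵏ⁾(0) = φ k` (`k = 0, …, m-1`). -/
def IsPDECauchySolution {K : Type*} [NontriviallyNormedField K] {n : ℕ}
    (ρ : ℝ) (ν : ((Fin n → ℕ) → K) → ℝ)
    (Aop : ((Fin n → ℕ) → K) → ((Fin n → ℕ) → K))
    (m : ℕ) (φ : ℕ → ((Fin n → ℕ) → K)) (c : ℕ → ((Fin n → ℕ) → K)) : Prop :=
  (∀ j : ℕ, Filter.Tendsto (fun α : Fin n → ℕ => ‖c j α‖ * ρ ^ (∑ i, α i))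
    Filter.cofinite (nhds 0)) ∧
  (∃ r > (0 : ℝ), Filter.Tendsto (fun j : ℕ => ν (c j) * r ^ j) Filter.atTop (nhds 0)) ∧
  (∀ j : ℕ, (((j + m).factorial / j.factorial : ℕ) : K) • c (j + m) = Aop (c j)) ∧
  (∀ k < m, (k.factorial : K) • c k = φ k)

theorem pde_cauchy_problem_wellposed
    {p : ℕ} [Fact p.Prime]
    {K : Type*} [NontriviallyNormedField K] [CompleteSpace K] [IsAlgClosed K]
    [IsUltrametricDist K] [Algebra ℚ_[p] K]
    (hK : ∀ q : ℚ_[p], ‖algebraMap ℚ_[p] K q‖ = ‖q‖)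
    (n : ℕ) (hn : 1 ≤ n) (ρ : ℝ) (hρ : 0 < ρ)
    (m : ℕ) (hm : 1 ≤ m)
    (ν : ((Fin n → ℕ) → K) → ℝ)
    (hν : ∀ f : (Fin n → ℕ) → K, ν f = ⨆ α : Fin n → ℕ, ‖f α‖ * ρ ^ (∑ i, α i))
    (mul : ((Fin n → ℕ) → K) → ((Fin n → ℕ) → K) → ((Fin n → ℕ) → K))
    (hmul : ∀ (f g : (Fin n → ℕ) → K) (α : Fin n → ℕ),
      mul f g α = ∑ i ∈ Finset.Iic α, f i * g (α - i))
    (Dop : (Fin n → ℕ) → ((Fin n → ℕ) → K) → ((Fin n → ℕ) → K))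
    (hDop : ∀ (β : Fin n → ℕ) (f : (Fin n → ℕ) → K) (γ : Fin n → ℕ),
      Dop β f γ = ((∏ j, ((γ j + β j).factorial / (γ j).factorial) : ℕ) : K) * f (γ + β))
    (S : Finset (Fin n → ℕ))
    (hS : S = (Finset.Iic (fun _ => n : Fin n → ℕ)).filter (fun β => ∑ j, β j ≤ n))
    (hSne : S.Nonempty)
    (a : (Fin n → ℕ) → ((Fin n → ℕ) → K))
    (ha : ∀ β ∈ S, Tendsto (fun α : Fin n → ℕ => ‖a β α‖ * ρ ^ (∑ i, α i)) cofinite (nhds 0))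
    (Aop : ((Fin n → ℕ) → K) → ((Fin n → ℕ) → K))
    (hAop : ∀ f : (Fin n → ℕ) → K, Aop f = ∑ β ∈ S, mul (a β) (Dop β f))
    (M : ℝ) (hM : M = S.sup' hSne fun β => ρ ^ (-(∑ j, β j : ℤ)) * ν (a β))
    (hMpos : 0 < M)
    (φ : ℕ → ((Fin n → ℕ) → K))
    (hφ : ∀ k < m, Tendsto (fun α : Fin n → ℕ => ‖φ k α‖ * ρ ^ (∑ i, α i)) cofinite (nhds 0)) :
    ∃ c : ℕ → ((Fin n → ℕ) → K),
      IsPDECauchySolution ρ ν Aop m φ c ∧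
      (∀ t : K, ‖t‖ < (p : ℝ) ^ (-(1 : ℝ) / ((p : ℝ) - 1)) * M ^ (-(1 : ℝ) / (m : ℝ)) →
        Tendsto (fun j : ℕ => ν (c j) * ‖t‖ ^ j) atTop (nhds 0)) ∧
      (∀ c' : ℕ → ((Fin n → ℕ) → K), IsPDECauchySolution ρ ν Aop m φ c' → c' = c) := by
  classical
  haveI : CharZero K := charZero_of_injective_algebraMap (algebraMap ℚ_[p] K).injective
  have hm0 : 0 < m := hm
  have hfactK : ∀ N : ℕ, ((N.factorial : K)) ≠ 0 :=
    fun N => Nat.cast_ne_zero.2 N.factorial_ne_zero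
  -- basic ν facts
  have hν_nonneg : ∀ f : (Fin n → ℕ) → K, 0 ≤ ν f := fun f => by
    rw [hν]; exact P17.nu_nonneg hρ f
  have hν_le : ∀ (f : (Fin n → ℕ) → K) (C : ℝ),
      (∀ α : Fin n → ℕ, ‖f α‖ * ρ ^ (∑ i, α i) ≤ C) → ν f ≤ C := fun f C h => by
    rw [hν]; exact P17.nu_le h
  have hle_ν : ∀ (f : (Fin n → ℕ) → K), P17.Decay ρ f →
      ∀ α : Fin n → ℕ, ‖f α‖ * ρ ^ (∑ i, α i) ≤ ν f := fun f hf α => by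
    rw [hν]; exact P17.le_nu hρ hf α
  have hν_smul_le : ∀ (s : K) (f : (Fin n → ℕ) → K), P17.Decay ρ f →
      ν (s • f) ≤ ‖s‖ * ν f := by
    intro s f hf
    apply hν_le
    intro α
    calc ‖(s • f) α‖ * ρ ^ (∑ i, α i) = ‖s‖ * (‖f α‖ * ρ ^ (∑ i, α i)) := by
          simp [norm_mul, mul_assoc]
    _ ≤ ‖s‖ * ν f := mul_le_mul_of_nonneg_left (hle_ν f hf α) (norm_nonneg s)
  -- Dop facts
  have hDdec : ∀ (β : Fin n → ℕ) (f : (Fin n → ℕ) → K), P17.Decay ρ f →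
      P17.Decay ρ (Dop β f) := by
    intro β f hf
    have : Dop β f = fun γ : Fin n → ℕ =>
        (((∏ j, ((γ j + β j).factorial / (γ j).factorial) : ℕ)) : K) * f (γ + β) :=
      funext (hDop β f)
    rw [this]
    exact P17.decay_Dop hρ hf β _
  have hDν : ∀ (β : Fin n → ℕ) (f : (Fin n → ℕ) → K), P17.Decay ρ f →
      ν (Dop β f) ≤ ρ ^ (-(∑ j, β j : ℤ)) * ν f := by
    intro β f hf
    apply hν_le
    intro γ
    rw [hDop, hν]
    exact P17.Dop_wt_le hρ hf β γ _
  -- Aop facts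
  have hAdec : ∀ f : (Fin n → ℕ) → K, P17.Decay ρ f → P17.Decay ρ (Aop f) := by
    intro f hf
    rw [hAop]
    apply P17.decay_sum hρ
    intro β hβ
    have h1 : mul (a β) (Dop β f)
        = fun α : Fin n → ℕ => ∑ i ∈ Finset.Iic α, a β i * Dop β f (α - i) :=
      funext (hmul _ _)
    rw [h1]
    exact P17.decay_mul hρ (ha β hβ) (hDdec β f hf)
  have hAν : ∀ f : (Fin n → ℕ) → K, P17.Decay ρ f → ν (Aop f) ≤ M * ν f := by
    intro f hf
    apply hν_le
    intro α
    rw [hAop, Finset.sum_apply]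
    apply P17.sum_wt hρ _ _ _ (mul_nonneg hMpos.le (hν_nonneg f))
    intro β hβ
    rw [hmul]
    calc ‖∑ i ∈ Finset.Iic α, a β i * Dop β f (α - i)‖ * ρ ^ (∑ i, α i)
        ≤ (⨆ γ : Fin n → ℕ, ‖a β γ‖ * ρ ^ (∑ j, γ j))
            * ⨆ γ : Fin n → ℕ, ‖Dop β f γ‖ * ρ ^ (∑ j, γ j) :=
          P17.mul_wt_le hρ (ha β hβ) (hDdec β f hf) α
    _ = ν (a β) * ν (Dop β f) := by rw [hν, hν]
    _ ≤ ν (a β) * (ρ ^ (-(∑ j, β j : ℤ)) * ν f) :=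
          mul_le_mul_of_nonneg_left (hDν β f hf) (hν_nonneg (a β))
    _ = (ρ ^ (-(∑ j, β j : ℤ)) * ν (a β)) * ν f := by ring
    _ ≤ M * ν f := by
          apply mul_le_mul_of_nonneg_right _ (hν_nonneg f)
          rw [hM]
          exact Finset.le_sup' (fun β => ρ ^ (-(∑ j, β j : ℤ)) * ν (a β)) hβ
  have hAsmul : ∀ (s : K) (f : (Fin n → ℕ) → K), Aop (s • f) = s • Aop f := by
    intro s f
    rw [hAop, hAop, Finset.smul_sum]
    refine Finset.sum_congr rfl fun β hβ => ?_
    funext α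
    rw [Pi.smul_apply, hmul, hmul, smul_eq_mul, Finset.mul_sum]
    refine Finset.sum_congr rfl fun i hi => ?_
    rw [hDop, hDop, Pi.smul_apply, smul_eq_mul]
    ring
  -- iterates
  have hiter : ∀ (q : ℕ) (g : (Fin n → ℕ) → K), P17.Decay ρ g →
      P17.Decay ρ (Aop^[q] g) ∧ ν (Aop^[q] g) ≤ M ^ q * ν g := by
    intro q
    induction q with
    | zero =>
      intro g hg
      refine ⟨by simpa using hg, ?_⟩
      simp
    | succ q IH =>
      intro g hg
      obtain ⟨IH1, IH2⟩ := IH g hg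
      rw [Function.iterate_succ_apply']
      refine ⟨hAdec _ IH1, ?_⟩
      calc ν (Aop (Aop^[q] g)) ≤ M * ν (Aop^[q] g) := hAν _ IH1
      _ ≤ M * (M ^ q * ν g) := mul_le_mul_of_nonneg_left IH2 hMpos.le
      _ = M ^ (q + 1) * ν g := by ring
  -- the solution
  set X : ℕ → (Fin n → ℕ) → K := fun N => Aop^[N / m] (φ (N % m)) with hXdef
  set c : ℕ → (Fin n → ℕ) → K := fun N => ((N.factorial : K))⁻¹ • X N with hcdef
  have hdecφ : ∀ N : ℕ, P17.Decay ρ (φ (N % m)) := fun N => hφ _ (Nat.mod_lt N hm0)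
  have hdecX : ∀ N : ℕ, P17.Decay ρ (X N) := fun N => (hiter _ _ (hdecφ N)).1
  have hdecc : ∀ N : ℕ, P17.Decay ρ (c N) := fun N => P17.decay_smul hρ _ (hdecX N)
  -- recursion
  have hrec : ∀ j : ℕ, (((j + m).factorial / j.factorial : ℕ) : K) • c (j + m) = Aop (c j) := by
    intro j
    have hXe : X (j + m) = Aop (X j) := by
      simp only [hXdef]
      rw [Nat.add_div_right j hm0, Nat.add_mod_right, Function.iterate_succ_apply']
    have hcast : (((j + m).factorial / j.factorial : ℕ) : K)
        = ((j + m).factorial : K) / (j.factorial : K) :=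
      Nat.cast_div (Nat.factorial_dvd_factorial (Nat.le_add_right j m)) (hfactK j)
    have hscal : (((j + m).factorial / j.factorial : ℕ) : K) * ((j + m).factorial : K)⁻¹
        = ((j.factorial : K))⁻¹ := by
      rw [hcast]
      field_simp
      rw [← div_div, div_self (hfactK (j + m))]
    calc (((j + m).factorial / j.factorial : ℕ) : K) • c (j + m)
        = ((((j + m).factorial / j.factorial : ℕ) : K) * ((j + m).factorial : K)⁻¹) • X (j + m) := by
          rw [hcdef]; rw [smul_smul]
    _ = ((j.factorial : K))⁻¹ • Aop (X j) := by rw [hscal, hXe]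
    _ = Aop (((j.factorial : K))⁻¹ • X j) := (hAsmul _ _).symm
    _ = Aop (c j) := by rw [hcdef]
  -- initial data
  have hinit : ∀ k < m, (k.factorial : K) • c k = φ k := by
    intro k hk
    have hXk : X k = φ k := by
      simp only [hXdef]
      rw [Nat.div_eq_of_lt hk, Nat.mod_eq_of_lt hk, Function.iterate_zero_apply]
    rw [hcdef]
    simp only
    rw [hXk, smul_smul, mul_inv_cancel₀ (hfactK k), one_smul]
  -- main estimate
  have hSm : (Finset.range m).Nonempty := ⟨0, Finset.mem_range.2 hm0⟩
  set P : ℝ := (Finset.range m).sup' hSm (fun k => ν (φ k)) with hPdef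
  have hPk : ∀ N : ℕ, ν (φ (N % m)) ≤ P := fun N => by
    rw [hPdef]
    exact Finset.le_sup' (fun k => ν (φ k)) (Finset.mem_range.2 (Nat.mod_lt N hm0))
  have hP0 : 0 ≤ P := le_trans (hν_nonneg _) (hPk 0)
  set p₁ : ℝ := (p : ℝ) ^ ((1:ℝ) / ((p : ℝ) - 1)) with hp₁def
  have hppos : (0:ℝ) < (p : ℝ) := by
    have := (Fact.out : p.Prime).pos; exact_mod_cast this
  have hp₁pos : 0 < p₁ := Real.rpow_pos_of_pos hppos _
  set M₁ : ℝ := M ^ ((1:ℝ) / (m : ℝ)) with hM₁def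
  have hM₁pos : 0 < M₁ := Real.rpow_pos_of_pos hMpos _
  have hmR : ((m : ℝ)) ≠ 0 := by positivity
  have hM₁m : M₁ ^ m = M := by
    rw [hM₁def, ← Real.rpow_natCast (M ^ ((1:ℝ) / (m : ℝ))) m, ← Real.rpow_mul hMpos.le,
      one_div, inv_mul_cancel₀ hmR, Real.rpow_one]
  have hfnorm : ∀ N : ℕ, ‖((N.factorial : ℕ) : K)‖⁻¹ ≤ p₁ ^ N := by
    intro N
    have e : ((N.factorial : ℕ) : K) = algebraMap ℚ_[p] K ((N.factorial : ℕ) : ℚ_[p]) := by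
      rw [map_natCast]
    rw [e, hK]
    exact P17.norm_factorial_inv_le p N
  have hcb : ∀ N : ℕ, ν (c N) ≤ p₁ ^ N * (M ^ (N / m) * P) := by
    intro N
    have h1 : ν (c N) ≤ ‖((N.factorial : K))⁻¹‖ * ν (X N) := by
      rw [hcdef]
      exact hν_smul_le _ _ (hdecX N)
    have h2 : ν (X N) ≤ M ^ (N / m) * P := by
      refine le_trans (hiter (N / m) _ (hdecφ N)).2 ?_
      exact mul_le_mul_of_nonneg_left (hPk N) (by positivity)
    have h3 : ‖((N.factorial : K))⁻¹‖ ≤ p₁ ^ N := by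
      rw [norm_inv]
      exact hfnorm N
    calc ν (c N) ≤ ‖((N.factorial : K))⁻¹‖ * ν (X N) := h1
    _ ≤ p₁ ^ N * (M ^ (N / m) * P) :=
        mul_le_mul h3 h2 (hν_nonneg _) (by positivity)
  -- convergence radius
  set R : ℝ := (p : ℝ) ^ (-(1 : ℝ) / ((p : ℝ) - 1)) * M ^ (-(1 : ℝ) / (m : ℝ)) with hRdef
  have hReq : R = (p₁ * M₁)⁻¹ := by
    rw [hRdef, hp₁def, hM₁def, neg_div, Real.rpow_neg hppos.le, neg_div,
      Real.rpow_neg hMpos.le, mul_inv]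
  have hRpos : 0 < R := by
    rw [hReq]; positivity
  have hconv : ∀ r : ℝ, 0 ≤ r → r < R →
      Tendsto (fun j : ℕ => ν (c j) * r ^ j) atTop (nhds 0) := by
    intro r hr hrR
    set θ : ℝ := p₁ * M₁ * r with hθdef
    have hθ0 : 0 ≤ θ := by positivity
    have hθ1 : θ < 1 := by
      have h1 : p₁ * M₁ * r < p₁ * M₁ * R := by
        apply mul_lt_mul_of_pos_left hrR (by positivity)
      rw [hReq, mul_inv_cancel₀ (by positivity)] at h1
      exact h1
    set C0 : ℝ := max 1 ((M₁⁻¹) ^ m) with hC0def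
    have hC00 : 0 < C0 := lt_of_lt_of_le one_pos (le_max_left _ _)
    have hMdiv : ∀ N : ℕ, M ^ (N / m) ≤ M₁ ^ N * C0 := by
      intro N
      have e1 : M ^ (N / m) = M₁ ^ (m * (N / m)) := by rw [pow_mul, hM₁m]
      have e2 : M₁ ^ N = M₁ ^ (m * (N / m)) * M₁ ^ (N % m) := by
        rw [← pow_add, Nat.div_add_mod]
      have e3 : M₁ ^ (m * (N / m)) = M₁ ^ N * (M₁⁻¹) ^ (N % m) := by
        rw [e2, inv_pow, mul_assoc, mul_inv_cancel₀ (by positivity), mul_one]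
      rw [e1, e3]
      exact mul_le_mul_of_nonneg_left
        (P17.pow_le_max (by positivity) (Nat.mod_lt N hm0).le) (by positivity)
    have hbound : ∀ N : ℕ, ν (c N) * r ^ N ≤ (P * C0) * θ ^ N := by
      intro N
      calc ν (c N) * r ^ N ≤ (p₁ ^ N * (M ^ (N / m) * P)) * r ^ N :=
            mul_le_mul_of_nonneg_right (hcb N) (pow_nonneg hr N)
      _ ≤ (p₁ ^ N * ((M₁ ^ N * C0) * P)) * r ^ N := by
            have h0 : (0:ℝ) ≤ p₁ ^ N := by positivity
            have h1 : (0:ℝ) ≤ r ^ N := by positivity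
            exact mul_le_mul_of_nonneg_right (mul_le_mul_of_nonneg_left
              (mul_le_mul_of_nonneg_right (hMdiv N) hP0) h0) h1
      _ = (P * C0) * θ ^ N := by
            rw [hθdef, mul_pow, mul_pow]; ring
    apply squeeze_zero (fun N => mul_nonneg (hν_nonneg _) (pow_nonneg hr _)) hbound
    have := (tendsto_pow_atTop_nhds_zero_of_lt_one hθ0 hθ1).const_mul (P * C0)
    simpa using this
  -- assemble
  refine ⟨c, ⟨hdecc, ⟨R / 2, half_pos hRpos, hconv (R / 2) (half_pos hRpos).le (half_lt_self hRpos)⟩,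
    hrec, hinit⟩, ?_, ?_⟩
  · intro t ht
    exact hconv ‖t‖ (norm_nonneg t) ht
  · intro c' hc'
    obtain ⟨hd', hr', hrec', hinit'⟩ := hc'
    funext N
    induction N using Nat.strong_induction_on with
    | _ N IH =>
      rcases lt_or_ge N m with hNm | hNm
      · have h1 := hinit' N hNm
        have h2 := hinit N hNm
        funext α
        have h3 := congrFun (h1.trans h2.symm) α
        simp only [Pi.smul_apply, smul_eq_mul] at h3
        exact mul_left_cancel₀ (hfactK N) h3
      · have hjN : (N - m) + m = N := Nat.sub_add_cancel hNm
        have hjlt : N - m < N := by omega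
        have e1 := hrec' (N - m)
        have e2 := hrec (N - m)
        rw [hjN] at e1 e2
        rw [IH (N - m) hjlt] at e1
        have hcoe : ((((N - m) + m).factorial / (N - m).factorial : ℕ) : K) ≠ 0 := by
          apply Nat.cast_ne_zero.2
          exact Nat.ne_of_gt (Nat.div_pos (Nat.factorial_le (Nat.le_add_right _ _))
            (N - m).factorial_pos)
        rw [hjN] at hcoe
        funext α
        have h3 := congrFun (e1.trans e2.symm) α
        simp only [Pi.smul_apply, smul_eq_mul] at h3
        exact mul_left_cancel₀ hcoe h3
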